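/- For real numbers a > 0 and distinct reals x_1,…,x_s, the determinant of Vandermonde-type binomial matrices gives: det_{1≤i,j≤N} C(a + x_j, x_j − i) = ∏_{1≤i<j≤N} (x_j − x_i) · ∏_{j=1}^{N} (a + x_j)! / ((x_j − 1)!·(a + j)!), specialized here to nonnegative integers x_j ≥ 1 and integer a ≥ 0 with the convention C(n,k)=0 for k<0. -/

import Mathlib

/-- Binomial coefficient `C(a, k)` for integer arguments, with the convention
that it vanishes when `k < 0` or `k > a`. -/
def zchoose (a k : ℤ) : ℕ :=
  if 0 ≤ k ∧ k ≤ a then a.toNat.choose k.toNat else 0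

open Finset Polynomial

lemma entry_eq (a m i : ℕ) (hm : 1 ≤ m) :
    (zchoose ((a : ℤ) + m) ((m : ℤ) - (i + 1)) : ℚ)
      = ((a + m).factorial / (m - 1).factorial : ℚ) *
        ((1 / (a + (i + 1)).factorial : ℚ) *
          ∏ k ∈ Finset.range i, ((m : ℚ) - (k + 1))) := by
  by_cases h : i + 1 ≤ m
  · have hcond : (0 : ℤ) ≤ (m : ℤ) - (i + 1) ∧ (m : ℤ) - (i + 1) ≤ (a : ℤ) + m := by
      constructor <;> [omega; omega]
    rw [zchoose, if_pos hcond]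
    have h1 : ((a : ℤ) + m).toNat = a + m := by omega
    have h2 : ((m : ℤ) - (i + 1)).toNat = m - (i + 1) := by omega
    rw [h1, h2]
    have hle : m - (i + 1) ≤ a + m := by omega
    rw [Nat.cast_choose ℚ hle]
    have h3 : a + m - (m - (i + 1)) = a + (i + 1) := by omega
    rw [h3]
    -- product = descFactorial
    have hprod : ∏ k ∈ Finset.range i, ((m : ℚ) - (k + 1))
        = ((m - 1).descFactorial i : ℚ) := by
      rw [Nat.descFactorial_eq_prod_range, Nat.cast_prod]
      apply Finset.prod_congr rfl
      intro k hk
      have hk' : k < i := Finset.mem_range.mp hk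
      have : m - 1 - k + (k + 1) = m := by omega
      have := congrArg (fun n : ℕ => (n : ℚ)) this
      push_cast at this
      linarith
    rw [hprod]
    have hdf : ((m - (i + 1)).factorial * (m - 1).descFactorial i : ℕ) = (m - 1).factorial := by
      have := Nat.factorial_mul_descFactorial (n := m - 1) (k := i) (by omega)
      have he : m - 1 - i = m - (i + 1) := by omega
      rw [he] at this
      exact this
    have hdfq : ((m - (i + 1)).factorial : ℚ) * ((m - 1).descFactorial i : ℚ)
        = ((m - 1).factorial : ℚ) := by exact_mod_cast congrArg (fun n : ℕ => (n : ℚ)) hdf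
    have n1 : ((m - 1).factorial : ℚ) ≠ 0 := Nat.cast_ne_zero.mpr (Nat.factorial_ne_zero _)
    have n2 : ((m - (i + 1)).factorial : ℚ) ≠ 0 := Nat.cast_ne_zero.mpr (Nat.factorial_ne_zero _)
    have n3 : ((a + (i + 1)).factorial : ℚ) ≠ 0 := Nat.cast_ne_zero.mpr (Nat.factorial_ne_zero _)
    field_simp
    rw [← hdfq]
  · have hcond : ¬ ((0 : ℤ) ≤ (m : ℤ) - (i + 1) ∧ (m : ℤ) - (i + 1) ≤ (a : ℤ) + m) := by omega
    rw [zchoose, if_neg hcond]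
    have hmem : m - 1 ∈ Finset.range i := Finset.mem_range.mpr (by omega)
    rw [Finset.prod_eq_zero hmem]
    · simp
    · have : ((m - 1 : ℕ) : ℚ) + 1 = (m : ℚ) := by
        have : (m - 1) + 1 = m := by omega
        exact_mod_cast congrArg (fun n : ℕ => (n : ℚ)) this
      rw [this]; ring

lemma prod_pairs_eq {N : ℕ} (f : Fin N → Fin N → ℚ) :
    ∏ p ∈ Finset.univ.filter (fun p : Fin N × Fin N => p.1 < p.2), f p.1 p.2
      = ∏ i : Fin N, ∏ j ∈ Finset.Ioi i, f i j := by
  rw [← Finset.prod_sigma (Finset.univ : Finset (Fin N)) (fun i => Finset.Ioi i)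
      (fun p => f p.1 p.2)]
  apply Finset.prod_nbij' (fun p => ⟨p.1, p.2⟩) (fun p => (p.1, p.2))
  · intro p hp
    simp only [Finset.mem_sigma, Finset.mem_univ, Finset.mem_Ioi, true_and]
    exact (Finset.mem_filter.mp hp).2
  · intro p hp
    simp only [Finset.mem_filter, Finset.mem_univ, true_and]
    exact Finset.mem_Ioi.mp (Finset.mem_sigma.mp hp).2
  · intro p _; rfl
  · intro p _; rfl
  · intro p _; rfl

/-- Binomial determinant evaluation (Krattenthaler, Theorem 26 form), specialized
to integers `a ≥ 0` and distinct integers `x_j ≥ 1`: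
`det_{1≤i,j≤N} C(a+x_j, x_j-i)
   = ∏_{1≤i<j≤N} (x_j-x_i) ⬝ ∏_{j=1}^{N} (a+x_j)! / ((x_j-1)! (a+j)!)`. -/
theorem det_binomial_vandermonde (N a : ℕ) (x : Fin N → ℕ)
    (hx1 : ∀ i, 1 ≤ x i) (hinj : Function.Injective x) :
    (Matrix.of fun i j : Fin N =>
        (zchoose ((a : ℤ) + x j) ((x j : ℤ) - (i.1 + 1)) : ℚ)).det
      = (∏ p ∈ Finset.univ.filter (fun p : Fin N × Fin N => p.1 < p.2),
            ((x p.2 : ℚ) - (x p.1 : ℚ))) *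
        ∏ j : Fin N,
          (Nat.factorial (a + x j) : ℚ) /
            ((Nat.factorial (x j - 1) : ℚ) * (Nat.factorial (a + (j.1 + 1)) : ℚ)) := by
  set xq : Fin N → ℚ := fun j => (x j : ℚ) with hxq
  have step1 : (Matrix.of fun i j : Fin N =>
        (zchoose ((a : ℤ) + x j) ((x j : ℤ) - (i.1 + 1)) : ℚ))
      = Matrix.of fun i j : Fin N =>
          (((a + x j).factorial / (x j - 1).factorial : ℚ)) *
            ((1 / (a + (i.1 + 1)).factorial : ℚ) *
              ∏ k ∈ Finset.range i.1, (xq j - (k + 1))) := by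
    ext i j
    exact entry_eq a (x j) i.1 (hx1 j)
  rw [step1, Matrix.det_mul_row (fun j : Fin N => ((a + x j).factorial / (x j - 1).factorial : ℚ))
    (fun i j : Fin N => (1 / (a + (i.1 + 1)).factorial : ℚ) * ∏ k ∈ Finset.range i.1, (xq j - (k + 1)))]
  have h2 : (Matrix.det fun i j : Fin N =>
      1 / ((a + (i.1 + 1)).factorial : ℚ) * ∏ k ∈ Finset.range i.1, (xq j - (k + 1)))
      = (∏ i : Fin N, (1 / ((a + (i.1 + 1)).factorial : ℚ))) *
        (Matrix.of fun i j : Fin N => ∏ k ∈ Finset.range i.1, (xq j - (k + 1))).det :=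
    Matrix.det_mul_column _ _
  rw [h2]
  -- now det of polynomial matrix
  set p : Fin N → ℚ[X] := fun i => ∏ k ∈ Finset.range i.1, (X - C ((k : ℚ) + 1)) with hp
  have hmonic : ∀ i, (p i).Monic := fun i =>
    monic_prod_of_monic _ _ (fun k _ => monic_X_sub_C _)
  have hdeg : ∀ i : Fin N, (p i).natDegree = i.1 := by
    intro i
    rw [hp]
    simp only
    rw [Polynomial.natDegree_prod _ _ (fun k _ => X_sub_C_ne_zero _)]
    simp only [natDegree_X_sub_C, Finset.sum_const, Finset.card_range, smul_eq_mul, mul_one]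
  have hdet : (Matrix.of fun i j : Fin N =>
      ∏ k ∈ Finset.range i.1, (xq j - (k + 1))).det
      = (Matrix.vandermonde xq).det := by
    have h1 : (Matrix.of fun i j : Fin N => ∏ k ∈ Finset.range i.1, (xq j - (k + 1)))
        = (Matrix.of fun i j : Fin N => (p j).eval (xq i)).transpose := by
      ext i j
      simp [hp, Polynomial.eval_prod]
    rw [h1, Matrix.det_transpose,
      ← Matrix.det_eval_matrixOfPolynomials_eq_det_vandermonde xq p hdeg hmonic]
  rw [hdet, Matrix.det_vandermonde]
  rw [prod_pairs_eq (fun i j => xq j - xq i)]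
  have hcomb : (∏ j : Fin N, (((a + x j).factorial : ℚ) / (x j - 1).factorial)) *
      (∏ i : Fin N, (1 / ((a + (i.1 + 1)).factorial : ℚ)))
      = ∏ j : Fin N, ((a + x j).factorial : ℚ) /
          (((x j - 1).factorial : ℚ) * ((a + (j.1 + 1)).factorial : ℚ)) := by
    rw [← Finset.prod_mul_distrib]
    exact Finset.prod_congr rfl fun j _ => by rw [div_mul_div_comm, mul_one]
  rw [← mul_assoc, hcomb]
  ring
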